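/- Let d, κ be integers with d ≥ 2 or d ≤ -2, and Δ a positive integer. For a fixed integer m with m(d-1)+κ ≠ 0, the congruence m·d^{n₀} + κ·(d^{n₀}-1)/(d-1) ≡ m·d^{n} + κ·(d^{n}-1)/(d-1) (mod Δ) holds for integers n > n₀ ≥ 0 if and only if d^{n-n₀} ≡ 1 (mod |Δ(d-1)| / gcd(Δ(d-1), d^{n₀}(m(d-1)+κ))). -/

import Mathlib

lemma dvd_mul_iff_div_gcd_dvd {a b c : ℤ} (ha : a ≠ 0) :
    a ∣ b * c ↔ (|a| / (Int.gcd a b : ℤ)) ∣ c := by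
  have hg : 0 < Int.gcd a b := Int.gcd_pos_of_ne_zero_left _ ha
  have hg0 : (0:ℤ) < (Int.gcd a b : ℤ) := by exact_mod_cast hg
  set g : ℤ := (Int.gcd a b : ℤ) with hgdef
  have hcop : Int.gcd (a / g) (b / g) = 1 := Int.gcd_div_gcd_div_gcd hg
  have ha' : a = g * (a / g) := (Int.mul_ediv_cancel' (Int.gcd_dvd_left a b)).symm
  have hb' : b = g * (b / g) := (Int.mul_ediv_cancel' (Int.gcd_dvd_right a b)).symm
  have habs : |a| / g = |a / g| := by
    conv_lhs => rw [ha']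
    rw [abs_mul, abs_of_pos hg0, Int.mul_ediv_cancel_left _ hg0.ne']
  rw [habs, abs_dvd]
  constructor
  · intro h
    have h2 : g * (a / g) ∣ g * (b / g) * c := by rw [← ha', ← hb']; exact h
    rw [mul_assoc, mul_dvd_mul_iff_left hg0.ne'] at h2
    exact Int.dvd_of_dvd_mul_right_of_gcd_one h2 hcop
  · intro h
    calc a = g * (a / g) := ha'
    _ ∣ g * (b / g) * c := by rw [mul_assoc]; exact mul_dvd_mul_left g (h.mul_left _)
    _ = b * c := by rw [← hb']

theorem congruence_iff_pow_modEq (d κ m : ℤ) (hd : 2 ≤ |d|) (Δ : ℤ) (hΔ : 0 < Δ)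
    (hm : m * (d - 1) + κ ≠ 0) (n₀ n : ℕ) (hn : n₀ < n) :
    (m * d ^ n₀ + κ * (∑ i ∈ Finset.range n₀, d ^ i) ≡
      m * d ^ n + κ * (∑ i ∈ Finset.range n, d ^ i) [ZMOD Δ]) ↔
    d ^ (n - n₀) ≡ 1 [ZMOD (|Δ * (d - 1)| /
      (Int.gcd (Δ * (d - 1)) (d ^ n₀ * (m * (d - 1) + κ)) : ℤ))] := by
  have hd1 : d - 1 ≠ 0 := by
    rcases abs_cases d with ⟨h1, h2⟩ | ⟨h1, h2⟩ <;> omega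
  have ha : Δ * (d - 1) ≠ 0 := mul_ne_zero hΔ.ne' hd1
  have h1 := geom_sum_mul d n
  have h2 := geom_sum_mul d n₀
  have h3 : d ^ n = d ^ n₀ * d ^ (n - n₀) := by rw [← pow_add]; congr 1; omega
  have key : ((m * d ^ n + κ * (∑ i ∈ Finset.range n, d ^ i)) -
      (m * d ^ n₀ + κ * (∑ i ∈ Finset.range n₀, d ^ i))) * (d - 1) =
      (d ^ n₀ * (m * (d - 1) + κ)) * (d ^ (n - n₀) - 1) := by
    linear_combination κ * h1 - κ * h2 + (m * (d - 1) + κ) * h3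
  rw [Int.modEq_iff_dvd, Int.modEq_iff_dvd,
      ← mul_dvd_mul_iff_right hd1 (a := Δ), key,
      dvd_mul_iff_div_gcd_dvd ha, dvd_sub_comm]
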